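/- Let nmExt : {0,1}^n × {0,1}^d → {0,1} be any function, let X = {x_1,…,x_K} ⊆ {0,1}^n be a subset of size K = 2^k, and for each seed s let w^{(s)} = (nmExt(x_i,s))_{i∈[K]} ∈ {0,1}^K. Set D = 2^d. Suppose there exist D/4 pairwise disjoint pairs of seeds (s_1,s'_1),…,(s_{D/4},s'_{D/4}) with s_j ≠ s'_j such that dist(w^{(s_j)}, w^{(s'_j)}) < 1/2 − 2ε for every j ∈ [D/4]. Then there exists an adversarial function A : {0,1}^d → {0,1}^d (with no fixed points) such that, for X the uniform random variable on the set X, dist_TV( (nmExt(X,U_d), nmExt(X,A(U_d)), U_d), (U_1, nmExt(X,A(U_d)), U_d) ) > ε; in particular nmExt is not a (k,ε)-non-malleable extractor. -/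

import Mathlib

open Finset

/-- Total variation distance between two distributions on a finite type,
defined as the supremum over events of the difference of probabilities. -/
noncomputable def tvDist {Ω : Type*} [Fintype Ω] (p q : Ω → ℝ) : ℝ :=
  ⨆ S : Finset Ω, |∑ ω ∈ S, p ω - ∑ ω ∈ S, q ω|

/-- Distribution of `f a` when `a` is drawn uniformly from the finite set `A`. -/
noncomputable def unifPush {α Ω : Type*} [DecidableEq Ω] (A : Finset α) (f : α → Ω) :
    Ω → ℝ :=
  fun ω => ((A.filter fun a => f a = ω).card : ℝ) / (A.card : ℝ)

/-- An adversarial function: a map on seeds with no fixed points. -/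
def Adversarial {d : ℕ} (A : (Fin d → Bool) → (Fin d → Bool)) : Prop :=
  ∀ s, A s ≠ s

/-- Distribution of the tuple `(nmExt(X,U_d), nmExt(X,A(U_d)), U_d)` for `X` uniform
on the finset `X` and `U_d` an independent uniform seed. -/
noncomputable def realDist {n d : ℕ} (nmExt : (Fin n → Bool) → (Fin d → Bool) → Bool)
    (X : Finset (Fin n → Bool)) (A : (Fin d → Bool) → (Fin d → Bool)) :
    Bool × Bool × (Fin d → Bool) → ℝ :=
  unifPush (X ×ˢ (Finset.univ : Finset (Fin d → Bool)))
    (fun p => (nmExt p.1 p.2, nmExt p.1 (A p.2), p.2))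

/-- Distribution of the tuple `(U_1, nmExt(X,A(U_d)), U_d)`, with `U_1` a uniform bit
independent of `X` and `U_d`. -/
noncomputable def idealDist {n d : ℕ} (nmExt : (Fin n → Bool) → (Fin d → Bool) → Bool)
    (X : Finset (Fin n → Bool)) (A : (Fin d → Bool) → (Fin d → Bool)) :
    Bool × Bool × (Fin d → Bool) → ℝ :=
  unifPush ((Finset.univ : Finset Bool) ×ˢ X ×ˢ (Finset.univ : Finset (Fin d → Bool)))
    (fun p => (p.1, nmExt p.2.1 (A p.2.2), p.2.2))

/-- `nmExt` is a `(k,ε)`-non-malleable extractor: for every flat `(n,k)`-source `X`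
and every adversarial function `A`, the real and ideal distributions are `ε`-close
in total variation distance. -/
def IsNonMalleableExtractor (n k d : ℕ) (ε : ℝ)
    (nmExt : (Fin n → Bool) → (Fin d → Bool) → Bool) : Prop :=
  ∀ X : Finset (Fin n → Bool), X.card = 2 ^ k →
    ∀ A : (Fin d → Bool) → (Fin d → Bool), Adversarial A →
      tvDist (realDist nmExt X A) (idealDist nmExt X A) ≤ ε

lemma sum_unifPush {α Ω : Type*} [DecidableEq Ω] (A : Finset α) (f : α → Ω) (S : Finset Ω) :
    ∑ ω ∈ S, unifPush A f ω = (((A.filter fun a => f a ∈ S)).card : ℝ) / (A.card : ℝ) := by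
  classical
  unfold unifPush
  rw [← Finset.sum_div]
  congr 1
  rw [← Nat.cast_sum]
  congr 1
  have key : ∀ ω ∈ S, (A.filter fun a => f a ∈ S).filter (fun a => f a = ω)
      = A.filter fun a => f a = ω := by
    intro ω hω
    rw [Finset.filter_filter]
    apply Finset.filter_congr
    intro a _
    constructor
    · exact And.right
    · exact fun h => ⟨h ▸ hω, h⟩
  rw [Finset.card_eq_sum_card_fiberwise (f := f) (s := A.filter fun a => f a ∈ S) (t := S)
    (fun a ha => (Finset.mem_filter.mp ha).2)]
  exact Finset.sum_congr rfl fun ω hω => (congrArg Finset.card (key ω hω)).symm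

lemma le_tvDist {Ω : Type*} [Fintype Ω] (p q : Ω → ℝ) (S : Finset Ω) :
    |∑ ω ∈ S, p ω - ∑ ω ∈ S, q ω| ≤ tvDist p q := by
  rw [tvDist]
  refine le_ciSup (f := fun T : Finset Ω => |∑ ω ∈ T, p ω - ∑ ω ∈ T, q ω|)
    ⟨∑ ω, |p ω| + ∑ ω, |q ω|, ?_⟩ S
  rintro r ⟨T, rfl⟩
  calc |∑ ω ∈ T, p ω - ∑ ω ∈ T, q ω| ≤ |∑ ω ∈ T, p ω| + |∑ ω ∈ T, q ω| := abs_sub _ _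
    _ ≤ (∑ ω ∈ T, |p ω|) + ∑ ω ∈ T, |q ω| :=
      add_le_add (Finset.abs_sum_le_sum_abs _ _) (Finset.abs_sum_le_sum_abs _ _)
    _ ≤ (∑ ω, |p ω|) + ∑ ω, |q ω| :=
      add_le_add
        (Finset.sum_le_sum_of_subset_of_nonneg (Finset.subset_univ T) (by intros; positivity))
        (Finset.sum_le_sum_of_subset_of_nonneg (Finset.subset_univ T) (by intros; positivity))


/-- If for a function `nmExt` and a source set `{x₁,…,x_K} ⊆ {0,1}^n` of size `K = 2^k`
there exist `D/4` pairwise disjoint pairs of seeds (`R` pairs with `4R = 2^d = D`,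
encoded by `s, s'` with the combined map injective) whose evaluation vectors
`w⁽ˢ⁾ = (nmExt(xᵢ,s))ᵢ` are pairwise `(1/2 − 2ε)`-close, then there is an adversarial
function `A` witnessing that `nmExt` is not a `(k,ε)`-non-malleable extractor on the
uniform source over `{x₁,…,x_K}`. -/
theorem bad_pairs_refute_nmExt (n k d : ℕ) (ε : ℝ)
    (nmExt : (Fin n → Bool) → (Fin d → Bool) → Bool)
    (x : Fin (2 ^ k) → (Fin n → Bool)) (hx : Function.Injective x)
    (R : ℕ) (hR : 4 * R = 2 ^ d)
    (s s' : Fin R → (Fin d → Bool))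
    (hdisj : Function.Injective
      (fun p : Fin R × Bool => if p.2 then s' p.1 else s p.1))
    (hclose : ∀ j : Fin R,
      (hammingDist (fun i => nmExt (x i) (s j)) (fun i => nmExt (x i) (s' j)) : ℝ) /
          ((2 : ℝ) ^ k) < 1 / 2 - 2 * ε) :
    ∃ A : (Fin d → Bool) → (Fin d → Bool), Adversarial A ∧
      tvDist (realDist nmExt (Finset.univ.image x) A)
        (idealDist nmExt (Finset.univ.image x) A) > ε := by
  classical
  have h2pos : 0 < 2 ^ d := Nat.pow_pos (by norm_num)
  have hR0 : 0 < R := by omega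
  have hd0 : 0 < d := by
    rcases Nat.eq_zero_or_pos d with h | h
    · subst h; omega
    · exact h
  have hs_inj : Function.Injective s := fun a b hab => by
    have := hdisj (a₁ := (a, false)) (a₂ := (b, false)) (by simpa using hab)
    simpa using this
  have hs'_inj : Function.Injective s' := fun a b hab => by
    have := hdisj (a₁ := (a, true)) (a₂ := (b, true)) (by simpa using hab)
    simpa using this
  have hss' : ∀ a b, s a ≠ s' b := fun a b hab => by
    have := hdisj (a₁ := (a, false)) (a₂ := (b, true)) (by simpa using hab)
    simp at this
  set A : (Fin d → Bool) → (Fin d → Bool) := fun t =>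
    if h : ∃ j, s j = t then s' h.choose
    else if h' : ∃ j, s' j = t then s h'.choose
    else Function.update t ⟨0, hd0⟩ (!t ⟨0, hd0⟩) with hA
  have hAs : ∀ j, A (s j) = s' j := by
    intro j
    have h : ∃ j', s j' = s j := ⟨j, rfl⟩
    simp only [hA, dif_pos h]
    exact congrArg s' (hs_inj h.choose_spec)
  have hAs' : ∀ j, A (s' j) = s j := by
    intro j
    have h1 : ¬ ∃ j', s j' = s' j := fun ⟨j', hj'⟩ => hss' j' j hj'
    have h2 : ∃ j', s' j' = s' j := ⟨j, rfl⟩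
    simp only [hA, dif_neg h1, dif_pos h2]
    exact congrArg s (hs'_inj h2.choose_spec)
  have hAdv : Adversarial A := by
    intro t
    by_cases h : ∃ j, s j = t
    · simp only [hA, dif_pos h]
      exact fun hc => hss' _ _ (h.choose_spec.trans hc.symm)
    · by_cases h' : ∃ j, s' j = t
      · simp only [hA, dif_neg h, dif_pos h']
        exact fun hc => hss' _ _ (hc.trans h'.choose_spec.symm)
      · simp only [hA, dif_neg h, dif_neg h']
        intro hc
        have := congrFun hc ⟨0, hd0⟩
        simp at this
  refine ⟨A, hAdv, ?_⟩
  -- notation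
  set Xf := Finset.univ.image x with hXfdef
  have hXfcard : Xf.card = 2 ^ k := by
    rw [hXfdef, Finset.card_image_of_injective _ hx, Finset.card_univ, Fintype.card_fin]
  set P : Finset (Fin d → Bool) :=
    Finset.image (fun p : Fin R × Bool => if p.2 then s' p.1 else s p.1) Finset.univ with hPdef
  have hPcard : P.card = 2 * R := by
    rw [hPdef, Finset.card_image_of_injective _ hdisj, Finset.card_univ, Fintype.card_prod,
      Fintype.card_fin, Fintype.card_bool]
    ring
  set S : Finset (Bool × Bool × (Fin d → Bool)) :=
    Finset.univ.filter (fun ω => ω.1 = ω.2.1 ∧ ω.2.2 ∈ P) with hSdef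
  have hmemS : ∀ ω : Bool × Bool × (Fin d → Bool), ω ∈ S ↔ ω.1 = ω.2.1 ∧ ω.2.2 ∈ P := by
    intro ω; simp [hSdef]
  -- fiber counts
  set c : Fin R → ℕ := fun j =>
    (Finset.univ.filter fun i : Fin (2 ^ k) =>
      nmExt (x i) (s j) = nmExt (x i) (s' j)).card with hc
  have hg : ∀ j : Fin R,
      (∑ a ∈ Xf, if nmExt a (s j) = nmExt a (s' j) then (1 : ℕ) else 0) = c j := by
    intro j
    rw [hXfdef, Finset.sum_image (fun a _ b _ h => hx h)]
    simp only [hc]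
    rw [Finset.card_filter]
  have hg' : ∀ j : Fin R,
      (∑ a ∈ Xf, if nmExt a (s' j) = nmExt a (s j) then (1 : ℕ) else 0) = c j := by
    intro j
    rw [← hg j]
    exact Finset.sum_congr rfl fun a _ => if_congr eq_comm rfl rfl
  -- real count
  have hcount_real :
      ((Xf ×ˢ (Finset.univ : Finset (Fin d → Bool))).filter
        (fun p => ((nmExt p.1 p.2, nmExt p.1 (A p.2), p.2) : Bool × Bool × (Fin d → Bool)) ∈ S)).card
      = ∑ j : Fin R, 2 * c j := by
    have e1 : ∀ (a : Fin n → Bool) (u : Fin d → Bool),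
        (if ((nmExt a u, nmExt a (A u), u) : Bool × Bool × (Fin d → Bool)) ∈ S then (1 : ℕ) else 0)
        = if u ∈ P then (if nmExt a u = nmExt a (A u) then 1 else 0) else 0 := by
      intro a u
      by_cases hup : u ∈ P
      · by_cases hq : nmExt a u = nmExt a (A u)
        · simp [hmemS, hup, hq]
        · simp [hmemS, hup, hq]
      · simp [hmemS, hup]
    rw [Finset.card_filter, Finset.sum_product]
    calc (∑ a ∈ Xf, ∑ u : Fin d → Bool,
          if ((nmExt a u, nmExt a (A u), u) : Bool × Bool × (Fin d → Bool)) ∈ S then (1:ℕ) else 0)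
        = ∑ a ∈ Xf, ∑ u ∈ P, (if nmExt a u = nmExt a (A u) then (1:ℕ) else 0) := by
          refine Finset.sum_congr rfl fun a _ => ?_
          rw [Finset.sum_congr rfl (fun u _ => e1 a u), Finset.sum_ite_mem, Finset.univ_inter]
      _ = ∑ u ∈ P, ∑ a ∈ Xf, (if nmExt a u = nmExt a (A u) then (1:ℕ) else 0) :=
          Finset.sum_comm
      _ = ∑ pr : Fin R × Bool, ∑ a ∈ Xf,
            (if nmExt a (if pr.2 then s' pr.1 else s pr.1)
              = nmExt a (A (if pr.2 then s' pr.1 else s pr.1)) then (1:ℕ) else 0) := by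
          rw [hPdef]
          exact Finset.sum_image fun p _ q _ h => hdisj h
      _ = ∑ j : Fin R, 2 * c j := by
          rw [Fintype.sum_prod_type]
          refine Finset.sum_congr rfl fun j _ => ?_
          rw [Fintype.sum_bool]
          simp only [if_true, Bool.false_eq_true, if_false]
          rw [hAs, hAs', hg j, hg' j]
          ring
  -- ideal count
  have hcount_ideal :
      (((Finset.univ : Finset Bool) ×ˢ Xf ×ˢ (Finset.univ : Finset (Fin d → Bool))).filter
        (fun p => ((p.1, nmExt p.2.1 (A p.2.2), p.2.2) : Bool × Bool × (Fin d → Bool)) ∈ S)).card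
      = 2 ^ k * (2 * R) := by
    have e2 : ∀ (cb : Bool) (u : Fin d → Bool),
        (∑ b : Bool, if ((b, cb, u) : Bool × Bool × (Fin d → Bool)) ∈ S then (1:ℕ) else 0)
        = if u ∈ P then 1 else 0 := by
      intro cb u
      by_cases hup : u ∈ P
      · cases cb <;> simp [Fintype.sum_bool, hmemS, hup]
      · simp [Fintype.sum_bool, hmemS, hup]
    rw [Finset.card_filter, Finset.sum_product]
    calc (∑ b : Bool, ∑ p ∈ Xf ×ˢ (Finset.univ : Finset (Fin d → Bool)),
          if ((b, nmExt p.1 (A p.2), p.2) : Bool × Bool × (Fin d → Bool)) ∈ S then (1:ℕ) else 0)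
        = ∑ p ∈ Xf ×ˢ (Finset.univ : Finset (Fin d → Bool)), ∑ b : Bool,
            (if ((b, nmExt p.1 (A p.2), p.2) : Bool × Bool × (Fin d → Bool)) ∈ S then (1:ℕ) else 0) :=
          Finset.sum_comm
      _ = ∑ p ∈ Xf ×ˢ (Finset.univ : Finset (Fin d → Bool)),
            (if p.2 ∈ P then (1:ℕ) else 0) :=
          Finset.sum_congr rfl fun p _ => e2 _ _
      _ = ∑ a ∈ Xf, ∑ u : Fin d → Bool, (if u ∈ P then (1:ℕ) else 0) := by
          rw [Finset.sum_product]
      _ = 2 ^ k * (2 * R) := by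
          rw [Finset.sum_congr rfl fun a _ => by
            rw [Finset.sum_ite_mem, Finset.univ_inter, Finset.sum_const, smul_eq_mul, mul_one]]
          rw [Finset.sum_const, smul_eq_mul, hXfcard, hPcard]
  -- sums of distributions
  have hrealsum : ∑ ω ∈ S, realDist nmExt Xf A ω
      = ((∑ j : Fin R, 2 * c j : ℕ) : ℝ) / ((2:ℝ) ^ k * 2 ^ d) := by
    rw [realDist, sum_unifPush, hcount_real]
    congr 1
    rw [Finset.card_product, hXfcard, Finset.card_univ]
    simp only [Fintype.card_fun, Fintype.card_bool, Fintype.card_fin]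
    push_cast
    ring
  have hidealsum : ∑ ω ∈ S, idealDist nmExt Xf A ω = 1 / 4 := by
    rw [idealDist, sum_unifPush, hcount_ideal]
    rw [Finset.card_product, Finset.card_product, hXfcard, Finset.card_univ, Finset.card_univ]
    have hcb : (Fintype.card Bool) = 2 := Fintype.card_bool
    have hcf : (Fintype.card (Fin d → Bool)) = 2 ^ d := by simp [Fintype.card_fun]
    rw [hcb, hcf]
    have hDR : ((2:ℝ) ^ d) = 4 * R := by
      have := congrArg (Nat.cast : ℕ → ℝ) hR
      push_cast at this
      linarith
    push_cast
    rw [hDR]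
    have hKpos : (0:ℝ) < 2 ^ k := by positivity
    have hRpos : (0:ℝ) < (R:ℝ) := by positivity
    field_simp
  -- lower bound on real sum
  have hKpos : (0:ℝ) < 2 ^ k := by positivity
  have hDR : ((2:ℝ) ^ d) = 4 * R := by
    have := congrArg (Nat.cast : ℕ → ℝ) hR
    push_cast at this
    linarith
  have hcbound : ∀ j : Fin R, (2:ℝ) ^ k * (1 / 2 + 2 * ε) < c j := by
    intro j
    have hsplit : c j + hammingDist (fun i => nmExt (x i) (s j)) (fun i => nmExt (x i) (s' j))
        = 2 ^ k := by
      rw [hc]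
      have := Finset.card_filter_add_card_filter_not
        (s := (Finset.univ : Finset (Fin (2 ^ k))))
        (p := fun i => nmExt (x i) (s j) = nmExt (x i) (s' j))
      rw [Finset.card_univ, Fintype.card_fin] at this
      convert this using 2
      simp [hammingDist]
    have hh := hclose j
    set hj : ℕ := hammingDist (fun i => nmExt (x i) (s j)) (fun i => nmExt (x i) (s' j))
    have hcast : (c j : ℝ) + hj = 2 ^ k := by
      have := congrArg (Nat.cast : ℕ → ℝ) hsplit
      push_cast at this
      linarith
    have : (hj : ℝ) < 2 ^ k * (1 / 2 - 2 * ε) := by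
      rw [div_lt_iff₀ hKpos] at hh
      linarith
    linarith
  have hsumlb : ((R : ℝ)) * (2 ^ k * (1 + 4 * ε)) < ((∑ j : Fin R, 2 * c j : ℕ) : ℝ) := by
    push_cast
    have := Finset.sum_lt_sum_of_nonempty (s := (Finset.univ : Finset (Fin R)))
      (f := fun j => (2:ℝ) ^ k * (1 + 4 * ε)) (g := fun j => 2 * (c j : ℝ))
      (Finset.univ_nonempty_iff.mpr ⟨⟨0, hR0⟩⟩)
      (fun j _ => by
        have h1 := hcbound j
        have h2 : (2:ℝ) ^ k * (1 + 4 * ε) = 2 * (2 ^ k * (1 / 2 + 2 * ε)) := by ring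
        show (2:ℝ) ^ k * (1 + 4 * ε) < 2 * (c j : ℝ)
        linarith)
    rw [Finset.sum_const, Finset.card_univ, Fintype.card_fin, nsmul_eq_mul] at this
    linarith
  -- conclude
  have hle := le_tvDist (realDist nmExt Xf A) (idealDist nmExt Xf A) S
  have hkey : ε < ∑ ω ∈ S, realDist nmExt Xf A ω - ∑ ω ∈ S, idealDist nmExt Xf A ω := by
    rw [hrealsum, hidealsum]
    have hRpos : (0:ℝ) < R := by positivity
    have hdenpos : (0:ℝ) < 2 ^ k * 2 ^ d := by positivity
    rw [lt_sub_iff_add_lt, lt_div_iff₀ hdenpos]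
    calc (ε + 1 / 4) * (2 ^ k * 2 ^ d) = (R:ℝ) * (2 ^ k * (1 + 4 * ε)) := by
          rw [hDR]; ring
      _ < _ := hsumlb
  calc ε < ∑ ω ∈ S, realDist nmExt Xf A ω - ∑ ω ∈ S, idealDist nmExt Xf A ω := hkey
    _ ≤ |∑ ω ∈ S, realDist nmExt Xf A ω - ∑ ω ∈ S, idealDist nmExt Xf A ω| := le_abs_self _
    _ ≤ _ := hle
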